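/- If a word w has periods p and q and |w| ≥ p + q - gcd(p,q), then w has period gcd(p,q). -/

import Mathlib

/-- `w` has period `p`: letters at distance `p` coincide. -/
def HasPeriod {α : Type*} (w : List α) (p : ℕ) : Prop :=
  ∀ i, i + p < w.length → w[i]? = w[i + p]?

/-- Chain a single period several times. -/
private theorem fw_chain {β : Type*} (f : ℕ → β) (n r : ℕ)
    (h : ∀ i, i + r < n → f i = f (i + r)) :
    ∀ k i, i + k * r < n → f i = f (i + k * r) := by
  intro k
  induction k with
  | zero => simp
  | succ k ih =>
    intro i hi
    have hm : i + (k + 1) * r = i + k * r + r := by ring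
    have h1 : i + k * r < n := by
      have : i + k * r ≤ i + (k + 1) * r := by nlinarith
      omega
    have e1 : f i = f (i + k * r) := ih i h1
    have e2 : f (i + k * r) = f (i + k * r + r) := h _ (by omega)
    rw [e1, e2, hm]

/-- Single period gives equality on any two congruent positions. -/
private theorem fw_single {β : Type*} (f : ℕ → β) (n r : ℕ)
    (h : ∀ i, i + r < n → f i = f (i + r)) :
    ∀ i j, i < n → j < n → i % r = j % r → f i = f j := by
  have key : ∀ i j, i ≤ j → i < n → j < n → i % r = j % r → f i = f j := by
    intro i j hij hi hj hmod
    rcases Nat.eq_zero_or_pos r with hr | hr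
    · subst hr; simp [Nat.mod_zero] at hmod; rw [hmod]
    · have hdvd : r ∣ (j - i) := (Nat.modEq_iff_dvd' hij).mp hmod
      obtain ⟨k, hk⟩ := hdvd
      have : j = i + k * r := by rw [Nat.mul_comm k r]; omega
      subst this
      exact fw_chain f n r h k i hj
  intro i j hi hj hmod
  rcases le_total i j with hij | hij
  · exact key i j hij hi hj hmod
  · exact (key j i hij hj hi hmod.symm).symm

/-- Key auxiliary lemma for Fine–Wilf, at the level of functions. -/
private theorem fw_aux {β : Type*} :
    ∀ q p : ℕ, p ≤ q → ∀ (n : ℕ) (f : ℕ → β),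
    (∀ i, i + p < n → f i = f (i + p)) →
    (∀ i, i + q < n → f i = f (i + q)) →
    n ≥ p + q - Nat.gcd p q →
    ∀ i j, i < n → j < n → i % Nat.gcd p q = j % Nat.gcd p q → f i = f j := by
  intro q
  induction q using Nat.strong_induction_on with
  | _ q IH =>
    intro p hpq n f hp hq hlen i j hi hj hmod
    rcases Nat.eq_zero_or_pos p with hp0 | hp0
    · -- p = 0 : gcd = q
      subst hp0
      simp only [Nat.gcd_zero_left] at hmod ⊢
      exact fw_single f n q hq i j hi hj hmod
    rcases eq_or_lt_of_le hpq with hpe | hplt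
    · -- p = q : gcd = p
      subst hpe
      simp only [Nat.gcd_self] at hmod ⊢
      exact fw_single f n p hp i j hi hj hmod
    · -- 0 < p < q
      set g := Nat.gcd p q with hg
      have hgp : g ∣ p := Nat.gcd_dvd_left p q
      have hgq : g ∣ q := Nat.gcd_dvd_right p q
      have hg0 : 0 < g := Nat.gcd_pos_of_pos_left q hp0
      have hgle : g ≤ p := Nat.le_of_dvd hp0 hgp
      have hpg : p + g ≤ q := by
        have : g ∣ q - p := (Nat.dvd_sub hgq hgp)
        have h1 : 0 < q - p := by omega
        have := Nat.le_of_dvd h1 this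
        omega
      -- new pair (p', q') with p' ≤ q', both with gcd g, on prefix of length n - p
      have hgcd' : Nat.gcd p (q - p) = g := by
        rw [hg]; exact Nat.gcd_sub_self_right hpq
      -- period q - p on [0, n - p)
      have hqp : ∀ i, i + (q - p) < n - p → f i = f (i + (q - p)) := by
        intro i hi
        have h1 : i + q < n := by omega
        have e1 : f i = f (i + q) := hq i h1
        have e2 : f (i + (q - p)) = f (i + (q - p) + p) := hp _ (by omega)
        have : i + (q - p) + p = i + q := by omega
        rw [e1, e2, this]
      -- period p on [0, n - p)
      have hp' : ∀ i, i + p < n - p → f i = f (i + p) := fun i hi => hp i (by omega)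
      have hlen' : n - p ≥ p + (q - p) - Nat.gcd p (q - p) := by
        rw [hgcd']; omega
      -- apply IH ; order the pair
      have inner : ∀ i j, i < n - p → j < n - p → i % g = j % g → f i = f j := by
        rcases le_total p (q - p) with hle | hle
        · intro i j hi hj hm
          have := IH (q - p) (by omega) p hle (n - p) f hp' hqp hlen' i j hi hj
          rw [hgcd'] at this; exact this hm
        · intro i j hi hj hm
          have hgcd'' : Nat.gcd (q - p) p = g := by rw [Nat.gcd_comm]; exact hgcd'
          have hlen'' : n - p ≥ (q - p) + p - Nat.gcd (q - p) p := by rw [hgcd'']; omega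
          have := IH p (by omega) (q - p) hle (n - p) f hqp hp' hlen'' i j hi hj
          rw [hgcd''] at this; exact this hm
      -- extension: every position < n agrees with its residue
      have ext : ∀ i, i < n → f i = f (i % g) := by
        intro i
        induction i using Nat.strong_induction_on with
        | _ i IH2 =>
          intro hi
          by_cases hcase : i < n - p
          · exact inner i (i % g) hcase (by
              have : i % g < g := Nat.mod_lt _ hg0
              omega) (Nat.mod_mod_of_dvd i dvd_rfl).symm
          · have hip : p ≤ i := by omega
            have e1 : f (i - p) = f i := by
              have := hp (i - p) (by omega)
              rw [this]; congr 1; omega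
            have e2 : f (i - p) = f ((i - p) % g) := IH2 (i - p) (by omega) (by omega)
            have e3 : (i - p) % g = i % g := by
              obtain ⟨c, hc⟩ := hgp
              have h4 : i - p + g * c = i := by omega
              calc (i - p) % g = (i - p + g * c) % g := (Nat.add_mul_mod_self_left _ _ _).symm
                _ = i % g := by rw [h4]
            rw [← e1, e2, e3]
      have hj' : f j = f (j % g) := ext j hj
      have hi' : f i = f (i % g) := ext i hi
      rw [hi', hj', hmod]

theorem fine_wilf {α : Type*} (w : List α) (p q : ℕ)
    (hp : HasPeriod w p) (hq : HasPeriod w q)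
    (hlen : w.length ≥ p + q - Nat.gcd p q) :
    HasPeriod w (Nat.gcd p q) := by
  intro i hi
  set g := Nat.gcd p q with hg
  set n := w.length with hn
  have main : ∀ i j, i < n → j < n → i % g = j % g → w[i]? = w[j]? := by
    rcases le_total p q with hle | hle
    · intro i j hi hj hm
      exact fw_aux q p hle n (fun k => w[k]?) hp hq hlen i j hi hj hm
    · intro i j hi hj hm
      have hg' : Nat.gcd q p = g := by rw [Nat.gcd_comm]
      have hlen' : n ≥ q + p - Nat.gcd q p := by rw [hg']; omega
      have := fw_aux p q hle n (fun k => w[k]?) hq hp hlen' i j hi hj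
      rw [hg'] at this; exact this hm
  exact main i (i + g) (by omega) hi (by simp [Nat.add_mod_right])
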